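/- For every finite simple graph G on n ≥ 1 vertices, n ≤ αod(G) · χso(G) ≤ (n+1)²/4. -/

import Mathlib

open Finset

section OddIndepDefs

variable {V : Type*} [Fintype V] [DecidableEq V]

/-- `S` is an odd independent set in `G`: `S` is independent and every vertex outside `S`
has either no neighbor in `S` or an odd number of neighbors in `S`. -/
def IsOddIndepSet (G : SimpleGraph V) [DecidableRel G.Adj] (S : Finset V) : Prop :=
  (∀ u ∈ S, ∀ v ∈ S, ¬ G.Adj u v) ∧
  ∀ v ∉ S, (S.filter fun u => G.Adj v u) = ∅ ∨ Odd (S.filter fun u => G.Adj v u).card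

/-- The odd independence number: the largest size of an odd independent set. -/
noncomputable def oddIndepNum (G : SimpleGraph V) [DecidableRel G.Adj] : ℕ :=
  sSup {k | ∃ S : Finset V, IsOddIndepSet G S ∧ S.card = k}

/-- The independence number: the largest size of an independent set. -/
noncomputable def indepNum (G : SimpleGraph V) : ℕ :=
  sSup {k | ∃ S : Finset V, (∀ u ∈ S, ∀ v ∈ S, ¬ G.Adj u v) ∧ S.card = k}

/-- A strong odd coloring with `n` colors: a proper coloring such that for every vertex `v`,
every color appearing in the open neighborhood of `v` appears there an odd number of times. -/
def IsStrongOddColoring (G : SimpleGraph V) [DecidableRel G.Adj] {n : ℕ} (c : V → Fin n) : Prop :=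
  (∀ u v, G.Adj u v → c u ≠ c v) ∧
  ∀ v : V, ∀ k : Fin n,
    (univ.filter fun u => G.Adj v u ∧ c u = k) = ∅ ∨
    Odd (univ.filter fun u => G.Adj v u ∧ c u = k).card

/-- The strong odd chromatic number: minimum number of colors of a strong odd coloring. -/
noncomputable def strongOddChromNum (G : SimpleGraph V) [DecidableRel G.Adj] : ℕ :=
  sInf {n | ∃ c : V → Fin n, IsStrongOddColoring G c}

/-- The chromatic number, as a natural number. -/
noncomputable def chromNum (G : SimpleGraph V) : ℕ :=
  sInf {n | ∃ c : V → Fin n, ∀ u v, G.Adj u v → c u ≠ c v}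

/-- The square of a graph: two distinct vertices are adjacent iff they are at distance at most 2,
i.e. adjacent or having a common neighbor. -/
def graphSquare (G : SimpleGraph V) : SimpleGraph V where
  Adj u v := u ≠ v ∧ (G.Adj u v ∨ ∃ w, G.Adj u w ∧ G.Adj w v)
  symm := by
    refine ⟨?_⟩
    intro u v h
    refine ⟨h.1.symm, ?_⟩
    rcases h.2 with h' | ⟨w, h1, h2⟩
    · exact Or.inl h'.symm
    · exact Or.inr ⟨w, h2.symm, h1.symm⟩
  loopless := ⟨fun v h => h.1 rfl⟩

instance (G : SimpleGraph V) [DecidableRel G.Adj] : DecidableRel (graphSquare G).Adj :=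
  fun u v => inferInstanceAs (Decidable (u ≠ v ∧ (G.Adj u v ∨ ∃ w, G.Adj u w ∧ G.Adj w v)))

end OddIndepDefs



section AuxProof
set_option linter.unusedSectionVars false
variable {V : Type*} [Fintype V] [DecidableEq V] (G : SimpleGraph V) [DecidableRel G.Adj]

lemma oddIndep_empty : IsOddIndepSet G (∅ : Finset V) := by
  refine ⟨by simp, fun v _ => Or.inl (by simp)⟩

lemma bddAbove_oddIndepSet :
    BddAbove {k | ∃ S : Finset V, IsOddIndepSet G S ∧ S.card = k} := by
  refine ⟨Fintype.card V, ?_⟩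
  rintro k ⟨S, -, rfl⟩
  simpa using S.card_le_univ

lemma exists_identity_soc :
    ∃ c : V → Fin (Fintype.card V), IsStrongOddColoring G c := by
  refine ⟨Fintype.equivFin V, fun u v h hc => (G.ne_of_adj h) ((Fintype.equivFin V).injective hc), ?_⟩
  intro v k
  set F := (univ.filter fun u => G.Adj v u ∧ (Fintype.equivFin V) u = k) with hF
  have hsub : F ⊆ {(Fintype.equivFin V).symm k} := by
    intro u hu
    simp only [hF, mem_filter] at hu
    simp [← hu.2.2]
  rcases F.eq_empty_or_nonempty with h | h
  · exact Or.inl h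
  · right
    have h1 : F.card ≤ 1 := (card_le_card hsub).trans (by simp)
    have h2 : 1 ≤ F.card := Finset.card_pos.mpr h
    have : F.card = 1 := le_antisymm h1 h2
    simp [this]

lemma colorClass_oddIndep {m : ℕ} (c : V → Fin m) (hc : IsStrongOddColoring G c) (k : Fin m) :
    IsOddIndepSet G (univ.filter fun v => c v = k) := by
  constructor
  · intro u hu v hv hadj
    simp only [mem_filter] at hu hv
    exact hc.1 u v hadj (hu.2.trans hv.2.symm)
  · intro v hv
    have key : ((univ.filter fun w => c w = k).filter fun u => G.Adj v u)
        = univ.filter fun u => G.Adj v u ∧ c u = k := by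
      ext u; simp [and_comm]
    rw [key]
    exact hc.2 v k

lemma soc_of_oddIndep (S : Finset V) (hS : IsOddIndepSet G S) :
    ∃ c : V → Fin (Fintype.card V - S.card + 1), IsStrongOddColoring G c := by
  have hcard : Fintype.card {v : V // v ∉ S} = Fintype.card V - S.card := by
    rw [Fintype.card_subtype_compl]
    congr 1
    exact Fintype.card_coe S
  set t := Fintype.card V - S.card with ht
  have e : {v : V // v ∉ S} ≃ Fin t := Fintype.equivFinOfCardEq hcard
  set c : V → Fin (t + 1) := fun v => if h : v ∈ S then 0 else (e ⟨v, h⟩).succ with hc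
  have hc_zero : ∀ v, c v = 0 ↔ v ∈ S := by
    intro v
    by_cases h : v ∈ S
    · simp [hc, h]
    · simp [hc, h, Fin.succ_ne_zero]
  refine ⟨c, ?_, ?_⟩
  · intro u v hadj heq
    by_cases hu : u ∈ S <;> by_cases hv : v ∈ S
    · exact hS.1 u hu v hv hadj
    · rw [(hc_zero u).mpr hu] at heq
      exact hv ((hc_zero v).mp heq.symm)
    · rw [(hc_zero v).mpr hv] at heq
      exact hu ((hc_zero u).mp heq)
    · simp only [hc, dif_neg hu, dif_neg hv] at heq
      have := e.injective (Fin.succ_injective _ heq)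
      exact G.ne_of_adj hadj (congrArg Subtype.val this)
  · intro v k
    by_cases hk : k = 0
    · subst hk
      have key : (univ.filter fun u => G.Adj v u ∧ c u = 0) = S.filter fun u => G.Adj v u := by
        ext u; simp [hc_zero, and_comm]
      rw [key]
      by_cases hv : v ∈ S
      · left
        rw [Finset.filter_eq_empty_iff]
        intro u hu hadj
        exact hS.1 v hv u hu hadj
      · exact hS.2 v hv
    · have key : (univ.filter fun u => G.Adj v u ∧ c u = k) ⊆ {(e.symm (k.pred hk)).1} := by
        intro u hu
        simp only [mem_filter] at hu
        have hu' : u ∉ S := fun h => hk (((hc_zero u).mpr h) ▸ hu.2.2.symm)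
        have : (e ⟨u, hu'⟩).succ = k := by
          have := hu.2.2
          simpa [hc, dif_neg hu'] using this
        have he : e ⟨u, hu'⟩ = k.pred hk := by
          apply Fin.succ_injective
          rw [this, Fin.succ_pred]
        have : (⟨u, hu'⟩ : {v : V // v ∉ S}) = e.symm (k.pred hk) := by
          rw [← he, Equiv.symm_apply_apply]
        simp [← this]
      rcases (univ.filter fun u => G.Adj v u ∧ c u = k).eq_empty_or_nonempty with h | h
      · exact Or.inl h
      · right
        have h1 := (card_le_card key).trans_eq (card_singleton _)
        have h2 := Finset.card_pos.mpr h
        have : (univ.filter fun u => G.Adj v u ∧ c u = k).card = 1 := le_antisymm h1 h2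
        simp [this]

end AuxProof

/-- For every finite simple graph `G` on `n ≥ 1` vertices,
`n ≤ αod(G) · χso(G) ≤ (n+1)²/4`. -/
theorem card_le_oddIndepNum_mul_strongOddChromNum
    {V : Type*} [Fintype V] [DecidableEq V] (G : SimpleGraph V) [DecidableRel G.Adj]
    (hn : 1 ≤ Fintype.card V) :
    Fintype.card V ≤ oddIndepNum G * strongOddChromNum G ∧
    (oddIndepNum G * strongOddChromNum G : ℝ) ≤ (Fintype.card V + 1) ^ 2 / 4 := by
  classical
  have hmem1 : strongOddChromNum G ∈ {m | ∃ c : V → Fin m, IsStrongOddColoring G c} :=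
    Nat.sInf_mem ⟨Fintype.card V, exists_identity_soc G⟩
  obtain ⟨c, hc⟩ := hmem1
  have hmem2 : oddIndepNum G ∈ {k | ∃ S : Finset V, IsOddIndepSet G S ∧ S.card = k} :=
    Nat.sSup_mem ⟨0, ∅, oddIndep_empty G, by simp⟩ (bddAbove_oddIndepSet G)
  obtain ⟨S, hS, hScard⟩ := hmem2
  have ha_le : oddIndepNum G ≤ Fintype.card V := by
    rw [← hScard]
    simpa using S.card_le_univ
  have hm_le : strongOddChromNum G ≤ Fintype.card V - oddIndepNum G + 1 := by
    obtain ⟨c', hc'⟩ := soc_of_oddIndep G S hS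
    have h : strongOddChromNum G ≤ Fintype.card V - S.card + 1 := Nat.sInf_le ⟨c', hc'⟩
    omega
  have hlow : Fintype.card V ≤ oddIndepNum G * strongOddChromNum G := by
    have hsum : Fintype.card V
        = ∑ k : Fin (strongOddChromNum G), (univ.filter fun v => c v = k).card := by
      rw [← Finset.card_univ]
      exact Finset.card_eq_sum_card_fiberwise (fun x _ => mem_univ _)
    have hterm : ∀ k : Fin (strongOddChromNum G),
        (univ.filter fun v => c v = k).card ≤ oddIndepNum G := by
      intro k
      exact le_csSup (bddAbove_oddIndepSet G) ⟨_, colorClass_oddIndep G c hc k, rfl⟩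
    calc Fintype.card V
        = ∑ k : Fin (strongOddChromNum G), (univ.filter fun v => c v = k).card := hsum
      _ ≤ ∑ _k : Fin (strongOddChromNum G), oddIndepNum G :=
          Finset.sum_le_sum fun k _ => hterm k
      _ = strongOddChromNum G * oddIndepNum G := by simp [mul_comm]
      _ = oddIndepNum G * strongOddChromNum G := mul_comm _ _
  refine ⟨hlow, ?_⟩
  have ham : oddIndepNum G + strongOddChromNum G ≤ Fintype.card V + 1 := by omega
  have hamR : (oddIndepNum G : ℝ) + strongOddChromNum G ≤ Fintype.card V + 1 := by
    exact_mod_cast ham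
  have ha0 : (0 : ℝ) ≤ oddIndepNum G := Nat.cast_nonneg _
  have hm0 : (0 : ℝ) ≤ strongOddChromNum G := Nat.cast_nonneg _
  push_cast
  nlinarith [sq_nonneg ((oddIndepNum G : ℝ) - strongOddChromNum G),
    sq_nonneg ((oddIndepNum G : ℝ) + strongOddChromNum G)]
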